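/- arXiv:2307.03940 — 4 statements merged into one kernel-verified Lean document; each statement's English description precedes it below -/
import Mathlib

section
/- For every a > 0, the set of counterexamples 𝔠(ℝ × aℤ) to uniqueness in sampled Gabor phase retrieval on the set of equidistant horizontal lines ℝ × aℤ is dense in L²(ℝ). -/
open MeasureTheory Complex
open scoped Real FourierTransform ENNReal NNReal

/-- The Gabor transform of `f : ℝ → ℂ` at `(x, ω)`:
`Gf(x,ω) = 2^{1/4} ∫ f(t) e^{-π(t-x)²} e^{-2πitω} dt`. -/
noncomputable def gaborTransform (f : ℝ → ℂ) (x ω : ℝ) : ℂ :=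
  (((2 : ℝ) ^ ((1 : ℝ) / 4) : ℝ) : ℂ) *
    ∫ t : ℝ, f t * Complex.exp (-(Real.pi : ℂ) * ((t : ℂ) - (x : ℂ)) ^ 2) *
      Complex.exp (-2 * (Real.pi : ℂ) * Complex.I * (t : ℂ) * (ω : ℂ))

/-- The set of counterexamples to uniqueness in sampled Gabor phase retrieval on `Λ ⊆ ℝ²`:
all `f ∈ L²(ℝ)` for which there is `g ∈ L²(ℝ)` with `|Gf| = |Gg|` on `Λ` and `f` does not
agree with `g` up to global phase. -/
noncomputable def counterexamples (Λ : Set (ℝ × ℝ)) :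
    Set (Lp ℂ 2 (volume : Measure ℝ)) :=
  {f | ∃ g : Lp ℂ 2 (volume : Measure ℝ),
    (∀ p ∈ Λ, ‖gaborTransform (⇑f) p.1 p.2‖ =
      ‖gaborTransform (⇑g) p.1 p.2‖) ∧
    ¬ ∃ α : ℝ, f = Complex.exp (α * Complex.I) • g}

namespace GaborCE

noncomputable def e2 (x : ℝ) (t : ℝ) : ℂ :=
  Complex.exp (-(Real.pi : ℂ) * ((t : ℂ) - (x : ℂ)) ^ 2)

noncomputable def e3 (ω : ℝ) (t : ℝ) : ℂ :=
  Complex.exp (-2 * (Real.pi : ℂ) * Complex.I * (t : ℂ) * (ω : ℂ))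

lemma gaborTransform_eq (f : ℝ → ℂ) (x ω : ℝ) :
    gaborTransform f x ω
      = (((2 : ℝ) ^ ((1 : ℝ) / 4) : ℝ) : ℂ) * ∫ t : ℝ, f t * e2 x t * e3 ω t := rfl

lemma e2_cont (x : ℝ) : Continuous (e2 x) := by
  unfold e2; fun_prop

lemma e3_cont (ω : ℝ) : Continuous (e3 ω) := by
  unfold e3; fun_prop

lemma integrable_ker {k : ℝ → ℂ} (hk : Continuous k) (hks : HasCompactSupport k) (x ω : ℝ) :
    Integrable (fun t : ℝ => k t * e2 x t * e3 ω t) := by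
  have hc : Continuous (fun t : ℝ => k t * e2 x t * e3 ω t) :=
    (hk.mul (e2_cont x)).mul (e3_cont ω)
  exact hc.integrable_of_hasCompactSupport (hks.mul_right.mul_right)

lemma gabor_congr {f g : ℝ → ℂ} (h : f =ᵐ[volume] g) (x ω : ℝ) :
    gaborTransform f x ω = gaborTransform g x ω := by
  rw [gaborTransform_eq, gaborTransform_eq]
  congr 1
  exact integral_congr_ae (h.mono fun t ht => by simp only [ht])

lemma gabor_smul (h : ℝ → ℂ) (lam : ℂ) (x ω : ℝ) :
    gaborTransform (fun t => lam * h t) x ω = lam * gaborTransform h x ω := by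
  rw [gaborTransform_eq, gaborTransform_eq]
  have : (∫ t : ℝ, (lam * h t) * e2 x t * e3 ω t)
      = lam * ∫ t : ℝ, h t * e2 x t * e3 ω t := by
    rw [← integral_const_mul _ _]
    exact integral_congr_ae (Filter.Eventually.of_forall fun t => by ring)
  rw [this]; ring

lemma gabor_combo {h h₁ : ℝ → ℂ} (hh : Continuous h) (hhs : HasCompactSupport h)
    (hh1 : Continuous h₁) (hh1s : HasCompactSupport h₁) (α β : ℂ) (x ω : ℝ) :
    gaborTransform (fun t => α * h t + β * h₁ t) x ω
      = α * gaborTransform h x ω + β * gaborTransform h₁ x ω := by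
  rw [gaborTransform_eq, gaborTransform_eq, gaborTransform_eq]
  have key : (∫ t : ℝ, (α * h t + β * h₁ t) * e2 x t * e3 ω t)
      = α * (∫ t : ℝ, h t * e2 x t * e3 ω t) + β * ∫ t : ℝ, h₁ t * e2 x t * e3 ω t := by
    rw [← integral_const_mul _ _, ← integral_const_mul _ _,
      ← integral_add ((integrable_ker hh hhs x ω).const_mul α)
        ((integrable_ker hh1 hh1s x ω).const_mul β)]
    exact integral_congr_ae (Filter.Eventually.of_forall fun t => by ring)
  rw [key]; ring

/-- the key covariance identity -/
lemma gabor_shift (h : ℝ → ℂ) (c x ω : ℝ) :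
    gaborTransform (fun t => Complex.exp ((Real.pi : ℂ) * (c : ℂ) * (t : ℂ)) * h (t - c / 2)) x ω
      = Complex.exp ((Real.pi : ℂ) * (c : ℂ) ^ 2 / 4
            + (Real.pi : ℂ) * (c : ℂ) * ((x : ℂ) - Complex.I * (ω : ℂ))) *
          gaborTransform h x ω := by
  rw [gaborTransform_eq, gaborTransform_eq]
  have step1 : (∫ t : ℝ, Complex.exp ((Real.pi : ℂ) * (c : ℂ) * (t : ℂ)) * h (t - c / 2)
        * e2 x t * e3 ω t)
      = ∫ s : ℝ, Complex.exp ((Real.pi : ℂ) * (c : ℂ) * ((s + c / 2 : ℝ) : ℂ))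
          * h (s + c / 2 - c / 2) * e2 x (s + c / 2) * e3 ω (s + c / 2) :=
    (integral_add_right_eq_self (fun t : ℝ => Complex.exp ((Real.pi : ℂ) * (c : ℂ) * (t : ℂ))
      * h (t - c / 2) * e2 x t * e3 ω t) (c / 2)).symm
  have step2 : (∫ s : ℝ, Complex.exp ((Real.pi : ℂ) * (c : ℂ) * ((s + c / 2 : ℝ) : ℂ))
          * h (s + c / 2 - c / 2) * e2 x (s + c / 2) * e3 ω (s + c / 2))
      = ∫ s : ℝ, Complex.exp ((Real.pi : ℂ) * (c : ℂ) ^ 2 / 4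
            + (Real.pi : ℂ) * (c : ℂ) * ((x : ℂ) - Complex.I * (ω : ℂ)))
          * (h s * e2 x s * e3 ω s) := by
    refine integral_congr_ae (Filter.Eventually.of_forall fun s => ?_)
    beta_reduce
    have hs : s + c / 2 - c / 2 = s := by ring
    rw [hs]
    simp only [e2, e3]
    calc Complex.exp ((Real.pi : ℂ) * (c : ℂ) * ((s + c / 2 : ℝ) : ℂ)) * h s
          * Complex.exp (-(Real.pi : ℂ) * (((s + c / 2 : ℝ) : ℂ) - (x : ℂ)) ^ 2)
          * Complex.exp (-2 * (Real.pi : ℂ) * Complex.I * ((s + c / 2 : ℝ) : ℂ) * (ω : ℂ))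
        = h s * Complex.exp ((Real.pi : ℂ) * (c : ℂ) * ((s + c / 2 : ℝ) : ℂ)
            + -(Real.pi : ℂ) * (((s + c / 2 : ℝ) : ℂ) - (x : ℂ)) ^ 2
            + -2 * (Real.pi : ℂ) * Complex.I * ((s + c / 2 : ℝ) : ℂ) * (ω : ℂ)) := by
          rw [Complex.exp_add, Complex.exp_add]; ring
      _ = h s * Complex.exp (((Real.pi : ℂ) * (c : ℂ) ^ 2 / 4
            + (Real.pi : ℂ) * (c : ℂ) * ((x : ℂ) - Complex.I * (ω : ℂ)))
            + -(Real.pi : ℂ) * ((s : ℂ) - (x : ℂ)) ^ 2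
            + -2 * (Real.pi : ℂ) * Complex.I * (s : ℂ) * (ω : ℂ)) := by
          congr 1
          push_cast
          ring
      _ = Complex.exp ((Real.pi : ℂ) * (c : ℂ) ^ 2 / 4
            + (Real.pi : ℂ) * (c : ℂ) * ((x : ℂ) - Complex.I * (ω : ℂ)))
          * (h s * Complex.exp (-(Real.pi : ℂ) * ((s : ℂ) - (x : ℂ)) ^ 2)
            * Complex.exp (-2 * (Real.pi : ℂ) * Complex.I * (s : ℂ) * (ω : ℂ))) := by
          rw [Complex.exp_add, Complex.exp_add]; ring
  rw [step1, step2, integral_const_mul _ _]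
  ring

/-- Injectivity input: if all frequency samples at a fixed window position vanish,
the function vanishes. -/
lemma eq_zero_of_gabor_zero {h : ℝ → ℂ} (hh : Continuous h) (hhs : HasCompactSupport h)
    (x : ℝ) (hz : ∀ ω : ℝ, gaborTransform h x ω = 0) : ∀ t, h t = 0 := by
  set k : ℝ → ℂ := fun t => h t * e2 x t with hk
  have hkc : Continuous k := hh.mul (by unfold e2; fun_prop)
  have hkcs : HasCompactSupport k := hhs.mul_right
  have hki : Integrable k := hkc.integrable_of_hasCompactSupport hkcs
  have hC : (((2 : ℝ) ^ ((1 : ℝ) / 4) : ℝ) : ℂ) ≠ 0 := by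
    simp only [ne_eq, Complex.ofReal_eq_zero]
    positivity
  have hF : 𝓕 k = 0 := by
    funext ω
    have h0 := hz ω
    rw [gaborTransform_eq] at h0
    have h1 : (∫ t : ℝ, h t * e2 x t * e3 ω t) = 0 := by
      rcases mul_eq_zero.mp h0 with hc | hi
      · exact absurd hc hC
      · exact hi
    rw [Real.fourier_real_eq_integral_exp_smul, Pi.zero_apply]
    rw [← h1]
    refine integral_congr_ae (Filter.Eventually.of_forall fun t => ?_)
    simp only [smul_eq_mul, hk, e3]
    rw [show ((-2 * π * t * ω : ℝ) : ℂ) * Complex.I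
        = -2 * (Real.pi : ℂ) * Complex.I * (t : ℂ) * (ω : ℂ) by push_cast; ring]
    ring
  have hinv := hkc.fourierInv_fourier_eq hki (by rw [hF]; exact integrable_zero _ _ _)
  rw [hF] at hinv
  have hzero : ∀ w : ℝ, 𝓕⁻ (0 : ℝ → ℂ) w = 0 := by
    intro w
    rw [Real.fourierInv_eq]
    simp
  intro t
  have hk0 : k t = 0 := by
    rw [← congrFun hinv t]
    exact hzero t
  have he : e2 x t ≠ 0 := Complex.exp_ne_zero _
  rcases mul_eq_zero.mp hk0 with h' | h'
  · exact h'
  · exact absurd h' he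

lemma coeFn_combo {h h₁ : ℝ → ℂ} (hm : MemLp h 2 (volume : Measure ℝ))
    (hm₁ : MemLp h₁ 2 (volume : Measure ℝ)) (α β : ℂ) :
    ⇑(α • hm.toLp h + β • hm₁.toLp h₁) =ᵐ[volume] fun t => α * h t + β * h₁ t := by
  filter_upwards [Lp.coeFn_add (α • hm.toLp h) (β • hm₁.toLp h₁),
    Lp.coeFn_smul α (hm.toLp h), Lp.coeFn_smul β (hm₁.toLp h₁),
    hm.coeFn_toLp, hm₁.coeFn_toLp] with t e1 e2 e3 e4 e5
  rw [e1, Pi.add_apply, e2, e3, Pi.smul_apply, Pi.smul_apply, e4, e5, smul_eq_mul, smul_eq_mul]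

lemma exists_approx (f₀ : Lp ℂ 2 (volume : Measure ℝ)) {ε : ℝ} (hε : 0 < ε) :
    ∃ h : ℝ → ℂ, Continuous h ∧ HasCompactSupport h ∧ (∃ t₀, h t₀ ≠ 0) ∧
      ∀ hm : MemLp h 2 (volume : Measure ℝ), dist (hm.toLp h) f₀ ≤ ε := by
  obtain ⟨h', hcs', hnorm', hcont', hmem'⟩ :=
    (Lp.memLp f₀).exists_hasCompactSupport_eLpNorm_sub_le (by norm_num : (2 : ℝ≥0∞) ≠ ∞)
      (ε := ENNReal.ofReal (ε / 2)) (by simp [ENNReal.ofReal_eq_zero]; positivity)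
  by_cases hz : ∀ t, h' t = 0
  · -- f₀ has small norm; use a small bump
    have hf₀ : ‖f₀‖ ≤ ε / 2 := by
      have h'eq : h' = 0 := funext hz
      rw [h'eq, sub_zero] at hnorm'
      rw [Lp.norm_def]
      calc (eLpNorm (⇑f₀) 2 volume).toReal ≤ (ENNReal.ofReal (ε / 2)).toReal :=
            ENNReal.toReal_mono ENNReal.ofReal_ne_top hnorm'
        _ = ε / 2 := ENNReal.toReal_ofReal (by positivity)
    set b : ℝ → ℂ := fun t => ((max 0 (1 - |t|) : ℝ) : ℂ) with hb
    have hbc : Continuous b :=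
      Complex.continuous_ofReal.comp (continuous_const.max (continuous_const.sub continuous_abs))
    have hbcs : HasCompactSupport b := by
      apply HasCompactSupport.intro (isCompact_Icc (a := (-1 : ℝ)) (b := 1))
      intro t ht
      have h1 : 1 - |t| ≤ 0 := by
        simp only [Set.mem_Icc, not_and_or, not_le] at ht
        rcases ht with h | h <;> [skip; skip] <;> cases abs_cases t <;> linarith
      simp [hb, max_eq_left h1]
    have hbm : MemLp b 2 (volume : Measure ℝ) := hbc.memLp_of_hasCompactSupport hbcs
    set B : ℝ := (eLpNorm b 2 volume).toReal with hB
    have hBnn : 0 ≤ B := ENNReal.toReal_nonneg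
    set η : ℝ := ε / (2 * (B + 1)) with hη
    have hηpos : 0 < η := by positivity
    refine ⟨fun t => (η : ℂ) * b t, continuous_const.mul hbc, hbcs.mul_left, ⟨0, ?_⟩, ?_⟩
    · simp [hb]
      positivity
    · intro hm
      have hnorm : ‖hm.toLp _‖ ≤ ε / 2 := by
        rw [Lp.norm_toLp]
        have hsmul : (fun t => (η : ℂ) * b t) = (η : ℂ) • b := rfl
        rw [hsmul, eLpNorm_const_smul]
        rw [ENNReal.toReal_mul]
        have h1 : (‖(η : ℂ)‖ₑ).toReal = η := by
          simp [abs_of_pos hηpos]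
        rw [h1, ← hB]
        calc η * B ≤ η * (B + 1) := by nlinarith
          _ = ε / 2 := by rw [hη, div_mul_eq_mul_div, div_eq_div_iff (by positivity) (by positivity)]; ring
      calc dist (hm.toLp _) f₀ ≤ ‖hm.toLp _‖ + ‖f₀‖ := dist_le_norm_add_norm _ _
        _ ≤ ε / 2 + ε / 2 := add_le_add hnorm hf₀
        _ = ε := by ring
  · push_neg at hz
    obtain ⟨t₀, ht₀⟩ := hz
    refine ⟨h', hcont', hcs', ⟨t₀, ht₀⟩, ?_⟩
    intro hm
    have hd : dist (hm.toLp h') f₀ = (eLpNorm (h' - ⇑f₀) 2 volume).toReal := by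
      rw [Lp.dist_def]
      congr 1
      exact eLpNorm_congr_ae (hm.coeFn_toLp.sub Filter.EventuallyEq.rfl)
    rw [hd, eLpNorm_sub_comm]
    calc (eLpNorm (⇑f₀ - h') 2 volume).toReal ≤ (ENNReal.ofReal (ε / 2)).toReal :=
          ENNReal.toReal_mono ENNReal.ofReal_ne_top hnorm'
      _ = ε / 2 := ENNReal.toReal_ofReal (by positivity)
      _ ≤ ε := by linarith

end GaborCE

/-- For every `a > 0`, the set of counterexamples on the equidistant horizontal lines
`ℝ × aℤ` is dense in `L²(ℝ)`. -/
theorem counterexamples_dense_on_horizontal_lines (a : ℝ) (ha : 0 < a) :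
    Dense (counterexamples {p : ℝ × ℝ | ∃ n : ℤ, p.2 = a * n}) := by
  rw [Metric.dense_iff]
  intro f₀ ε hε
  obtain ⟨h, hcont, hcs, ⟨t₀, ht₀⟩, hdist⟩ := GaborCE.exists_approx f₀ (half_pos hε)
  set c : ℝ := a⁻¹ with hc
  have hcpos : 0 < c := inv_pos.mpr ha
  have hca : (c : ℂ) * (a : ℂ) = 1 := by
    rw [← Complex.ofReal_mul, inv_mul_cancel₀ ha.ne', Complex.ofReal_one]
  set h₁ : ℝ → ℂ := fun t => Complex.exp ((Real.pi : ℂ) * (c : ℂ) * (t : ℂ)) * h (t - c / 2)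
    with hh₁
  have hcont₁ : Continuous h₁ := by
    apply Continuous.mul
    · exact Complex.continuous_exp.comp (by fun_prop)
    · exact hcont.comp (continuous_id.sub continuous_const)
  have hcs₁ : HasCompactSupport h₁ := by
    have hcomp : HasCompactSupport (fun t : ℝ => h (t - c / 2)) :=
      hcs.comp_isClosedEmbedding (Homeomorph.subRight (c / 2)).isClosedEmbedding
    exact hcomp.mul_left
  have hmem : MemLp h 2 (volume : Measure ℝ) := hcont.memLp_of_hasCompactSupport hcs
  have hmem₁ : MemLp h₁ 2 (volume : Measure ℝ) := hcont₁.memLp_of_hasCompactSupport hcs₁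
  set S : ℝ := ‖hmem.toLp h‖ + ‖hmem₁.toLp h₁‖ with hSdef
  have hS : 0 ≤ S := by positivity
  set δ : ℝ := ε / (2 * (S + 1)) with hδdef
  have hδ : 0 < δ := by positivity
  set F : Lp ℂ 2 (volume : Measure ℝ) :=
    ((1 : ℂ) - Complex.I * (δ : ℂ)) • hmem.toLp h + ((δ : ℂ)) • hmem₁.toLp h₁ with hF
  set G : Lp ℂ 2 (volume : Measure ℝ) :=
    ((1 : ℂ) + Complex.I * (δ : ℂ)) • hmem.toLp h + ((δ : ℂ)) • hmem₁.toLp h₁ with hG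
  have hFrep : ⇑F =ᵐ[volume]
      fun t => ((1 : ℂ) - Complex.I * (δ : ℂ)) * h t + (δ : ℂ) * h₁ t := by
    rw [hF]; exact GaborCE.coeFn_combo hmem hmem₁ _ _
  have hGrep : ⇑G =ᵐ[volume]
      fun t => ((1 : ℂ) + Complex.I * (δ : ℂ)) * h t + (δ : ℂ) * h₁ t := by
    rw [hG]; exact GaborCE.coeFn_combo hmem hmem₁ _ _
  have gaborF : ∀ x ω : ℝ, gaborTransform (⇑F) x ω
      = (((1 : ℂ) - Complex.I * (δ : ℂ)) + (δ : ℂ) * Complex.exp ((Real.pi : ℂ) * (c : ℂ) ^ 2 / 4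
          + (Real.pi : ℂ) * (c : ℂ) * ((x : ℂ) - Complex.I * (ω : ℂ))))
        * gaborTransform h x ω := by
    intro x ω
    calc gaborTransform (⇑F) x ω
        = gaborTransform (fun t => ((1 : ℂ) - Complex.I * (δ : ℂ)) * h t + (δ : ℂ) * h₁ t) x ω :=
          GaborCE.gabor_congr hFrep x ω
      _ = ((1 : ℂ) - Complex.I * (δ : ℂ)) * gaborTransform h x ω
            + (δ : ℂ) * gaborTransform h₁ x ω :=
          GaborCE.gabor_combo hcont hcs hcont₁ hcs₁ _ _ x ω
      _ = _ := by rw [hh₁, GaborCE.gabor_shift h c x ω]; ring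
  have gaborG : ∀ x ω : ℝ, gaborTransform (⇑G) x ω
      = (((1 : ℂ) + Complex.I * (δ : ℂ)) + (δ : ℂ) * Complex.exp ((Real.pi : ℂ) * (c : ℂ) ^ 2 / 4
          + (Real.pi : ℂ) * (c : ℂ) * ((x : ℂ) - Complex.I * (ω : ℂ))))
        * gaborTransform h x ω := by
    intro x ω
    calc gaborTransform (⇑G) x ω
        = gaborTransform (fun t => ((1 : ℂ) + Complex.I * (δ : ℂ)) * h t + (δ : ℂ) * h₁ t) x ω :=
          GaborCE.gabor_congr hGrep x ω
      _ = ((1 : ℂ) + Complex.I * (δ : ℂ)) * gaborTransform h x ω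
            + (δ : ℂ) * gaborTransform h₁ x ω :=
          GaborCE.gabor_combo hcont hcs hcont₁ hcs₁ _ _ x ω
      _ = _ := by rw [hh₁, GaborCE.gabor_shift h c x ω]; ring
  refine ⟨F, Metric.mem_ball.mpr ?_, ?_⟩
  · -- distance estimate
    have h2 : F - hmem.toLp h
        = (-(Complex.I * (δ : ℂ))) • hmem.toLp h + ((δ : ℂ)) • hmem₁.toLp h₁ := by
      rw [hF]; module
    have h3 : dist F (hmem.toLp h) ≤ δ * S := by
      rw [dist_eq_norm, h2]
      calc ‖(-(Complex.I * (δ : ℂ))) • hmem.toLp h + ((δ : ℂ)) • hmem₁.toLp h₁‖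
          ≤ ‖(-(Complex.I * (δ : ℂ))) • hmem.toLp h‖ + ‖((δ : ℂ)) • hmem₁.toLp h₁‖ :=
            norm_add_le _ _
        _ = δ * ‖hmem.toLp h‖ + δ * ‖hmem₁.toLp h₁‖ := by
            rw [norm_smul, norm_smul]
            simp [abs_of_pos hδ]
        _ = δ * S := by rw [hSdef]; ring
    have hδS : δ * (S + 1) = ε / 2 := by
      rw [hδdef]
      field_simp
    have h4 : δ * S < ε / 2 := by nlinarith
    calc dist F f₀ ≤ dist F (hmem.toLp h) + dist (hmem.toLp h) f₀ := dist_triangle _ _ _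
      _ < ε / 2 + ε / 2 := by
          have := hdist hmem
          nlinarith
      _ = ε := by ring
  · -- membership in counterexamples
    refine ⟨G, ?_, ?_⟩
    · -- equal magnitudes on Λ
      intro p hp
      obtain ⟨n, hn⟩ := hp
      rw [hn, gaborF p.1 (a * (n : ℝ)), gaborG p.1 (a * (n : ℝ)), norm_mul, norm_mul]
      congr 1
      set E : ℂ := Complex.exp ((Real.pi : ℂ) * (c : ℂ) ^ 2 / 4
        + (Real.pi : ℂ) * (c : ℂ) * ((p.1 : ℂ) - Complex.I * ((a * (n : ℝ) : ℝ) : ℂ))) with hEdef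
      have hEconj : (starRingEnd ℂ) E = E := by
        rw [hEdef, ← Complex.exp_conj]
        have hK : (starRingEnd ℂ) ((Real.pi : ℂ) * (c : ℂ) ^ 2 / 4
            + (Real.pi : ℂ) * (c : ℂ) * ((p.1 : ℂ) - Complex.I * ((a * (n : ℝ) : ℝ) : ℂ)))
            = ((Real.pi : ℂ) * (c : ℂ) ^ 2 / 4
            + (Real.pi : ℂ) * (c : ℂ) * ((p.1 : ℂ) - Complex.I * ((a * (n : ℝ) : ℝ) : ℂ)))
              + ((c : ℂ) * (a : ℂ)) * ((n : ℂ) * (2 * (Real.pi : ℂ) * Complex.I)) := by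
          simp only [map_add, map_div₀, map_mul, map_sub, map_pow, map_ofNat,
            Complex.conj_ofReal, Complex.conj_I, map_one]
          push_cast
          ring
        rw [hK, hca, one_mul, Complex.exp_add, Complex.exp_int_mul_two_pi_mul_I, mul_one]
      have habs2 : ((1 : ℂ) - Complex.I * (δ : ℂ) + (δ : ℂ) * E)
          = (starRingEnd ℂ) ((1 : ℂ) + Complex.I * (δ : ℂ) + (δ : ℂ) * E) := by
        rw [map_add, map_add, map_mul, map_mul, hEconj, map_one, Complex.conj_I,
          Complex.conj_ofReal]
        ring
      rw [habs2, Complex.norm_conj]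
    · -- no global phase
      rintro ⟨α, hα⟩
      have hu_eq : ⇑F =ᵐ[volume] (Complex.exp ((α : ℂ) * Complex.I)) • ⇑G := by
        rw [hα]; exact Lp.coeFn_smul _ _
      set u : ℂ := Complex.exp ((α : ℂ) * Complex.I) with hu_def
      have heqn : ∀ᵐ t ∂(volume : Measure ℝ),
          ((1 : ℂ) - Complex.I * (δ : ℂ)) * h t + (δ : ℂ) * h₁ t
            = u * (((1 : ℂ) + Complex.I * (δ : ℂ)) * h t + (δ : ℂ) * h₁ t) := by
        filter_upwards [hFrep, hGrep, hu_eq] with t e1 e2 e3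
        rw [← e1, e3, Pi.smul_apply, smul_eq_mul, e2]
      have hδC : ((δ : ℝ) : ℂ) ≠ 0 := Complex.ofReal_ne_zero.mpr hδ.ne'
      by_cases hu : u = 1
      · have hh0 : h =ᵐ[volume] (fun _ => (0 : ℂ)) := by
          refine heqn.mono fun t ht => ?_
          rw [hu, one_mul] at ht
          have h2 : (2 * Complex.I * (δ : ℂ)) * h t = 0 := by linear_combination -ht
          have h3 : (2 * Complex.I * (δ : ℂ)) ≠ 0 :=
            mul_ne_zero (mul_ne_zero two_ne_zero Complex.I_ne_zero) hδC
          exact (mul_eq_zero.mp h2).resolve_left h3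
        have : h = fun _ => (0 : ℂ) :=
          (Continuous.ae_eq_iff_eq volume hcont continuous_const).mp hh0
        exact ht₀ (congrFun this t₀)
      · set lam : ℂ := (((1 : ℂ) - Complex.I * (δ : ℂ)) - u * ((1 : ℂ) + Complex.I * (δ : ℂ)))
          / ((δ : ℂ) * (u - 1)) with hlamdef
        have hden : ((δ : ℂ) * (u - 1)) ≠ 0 := mul_ne_zero hδC (sub_ne_zero.mpr hu)
        have hlam : h₁ =ᵐ[volume] fun t => lam * h t := by
          refine heqn.mono fun t ht => ?_
          show h₁ t = lam * h t
          rw [hlamdef, div_mul_eq_mul_div, eq_div_iff hden]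
          linear_combination -ht
        have habsE : ∀ x ω : ℝ, ‖Complex.exp ((Real.pi : ℂ) * (c : ℂ) ^ 2 / 4
            + (Real.pi : ℂ) * (c : ℂ) * ((x : ℂ) - Complex.I * (ω : ℂ)))‖
            = Real.exp (π * c ^ 2 / 4 + π * c * x) := by
          intro x ω
          have hKeq : ((Real.pi : ℂ) * (c : ℂ) ^ 2 / 4
              + (Real.pi : ℂ) * (c : ℂ) * ((x : ℂ) - Complex.I * (ω : ℂ)))
              = ((π * c ^ 2 / 4 + π * c * x : ℝ) : ℂ) + ((-(π * c * ω) : ℝ) : ℂ) * Complex.I := by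
            push_cast
            ring
          rw [hKeq, Complex.norm_exp]
          congr 1
          simp [← Complex.ofReal_pow]
        obtain ⟨x₀, hx₀⟩ : ∃ x₀ : ℝ, Real.exp (π * c ^ 2 / 4 + π * c * x₀) ≠ ‖lam‖ := by
          by_cases h0 : Real.exp (π * c ^ 2 / 4 + π * c * 0) = ‖lam‖
          · refine ⟨1, fun hcon => ?_⟩
            have h1 : Real.exp (π * c ^ 2 / 4 + π * c * 1)
                = Real.exp (π * c ^ 2 / 4 + π * c * 0) := hcon.trans h0.symm
            rw [Real.exp_eq_exp] at h1
            have hπc : 0 < π * c := mul_pos Real.pi_pos hcpos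
            nlinarith
          · exact ⟨0, h0⟩
        have hgabz : ∀ ω : ℝ, gaborTransform h x₀ ω = 0 := by
          intro ω
          by_contra hne0
          have e1 : gaborTransform h₁ x₀ ω
              = Complex.exp ((Real.pi : ℂ) * (c : ℂ) ^ 2 / 4
                + (Real.pi : ℂ) * (c : ℂ) * ((x₀ : ℂ) - Complex.I * (ω : ℂ)))
                * gaborTransform h x₀ ω := by
            rw [hh₁]; exact GaborCE.gabor_shift h c x₀ ω
          have e2 : gaborTransform h₁ x₀ ω = lam * gaborTransform h x₀ ω := by
            rw [GaborCE.gabor_congr hlam x₀ ω, GaborCE.gabor_smul]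
          have e3 : Complex.exp ((Real.pi : ℂ) * (c : ℂ) ^ 2 / 4
              + (Real.pi : ℂ) * (c : ℂ) * ((x₀ : ℂ) - Complex.I * (ω : ℂ))) = lam :=
            mul_right_cancel₀ hne0 (e1.symm.trans e2)
          exact hx₀ (by rw [← habsE x₀ ω, e3])
        have hzero := GaborCE.eq_zero_of_gabor_zero hcont hcs x₀ hgabz
        exact ht₀ (hzero t₀)
end

section
/- Let a > 0 and define h^±(t) = φ(t)(cosh(πt/a) ± i sinh(πt/a)) for t ∈ ℝ, where φ is the normalized Gaussian. Then h^+, h^- ∈ L²(ℝ), |Gh^+(x,ω)| = |Gh^-(x,ω)| for all (x,ω) ∈ ℝ × aℤ, and there is no α ∈ ℝ with h^+ = e^{iα} h^-. -/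
open MeasureTheory Complex

/-- The normalized Gaussian `φ(t) = 2^{1/4} e^{-πt²}`. -/
noncomputable def normGaussian (t : ℝ) : ℂ :=
  (((2 : ℝ) ^ ((1 : ℝ) / 4) * Real.exp (-Real.pi * t ^ 2) : ℝ) : ℂ)

/-- `h⁺(t) = φ(t)(cosh(πt/a) + i sinh(πt/a))`. -/
noncomputable def hPlus (a : ℝ) (t : ℝ) : ℂ :=
  normGaussian t *
    ((Real.cosh (Real.pi * t / a) : ℂ) + Complex.I * (Real.sinh (Real.pi * t / a) : ℂ))

/-- `h⁻(t) = φ(t)(cosh(πt/a) - i sinh(πt/a))`. -/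
noncomputable def hMinus (a : ℝ) (t : ℝ) : ℂ :=
  normGaussian t *
    ((Real.cosh (Real.pi * t / a) : ℂ) - Complex.I * (Real.sinh (Real.pi * t / a) : ℂ))

/- ### Auxiliary machinery -/

/-- The coefficient `c_± = 2πx ± π/a - 2πiω` of the Gaussian integral. -/
noncomputable def gaborCC (a x ω : ℝ) (s : ℝ) : ℂ :=
  2*Real.pi*x + s*(Real.pi/a) - 2*Real.pi*Complex.I*ω

/-- The closed-form value of the Gabor transform of `φ·(cosh + ε sinh)`. -/
noncomputable def gaborG (a x ω : ℝ) (ε : ℂ) : ℂ :=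
  (1+ε)/2 * Complex.exp ((-Real.pi*x^2 : ℂ) - (gaborCC a x ω 1)^2 / (4 * -(2*(Real.pi:ℂ))))
  + (1-ε)/2 * Complex.exp ((-Real.pi*x^2 : ℂ) - (gaborCC a x ω (-1))^2 / (4 * -(2*(Real.pi:ℂ))))

lemma gabor_integrand_eq (a x ω : ℝ) (ε : ℂ) (t : ℝ) :
    (normGaussian t * ((Real.cosh (Real.pi*t/a) : ℂ) + ε * (Real.sinh (Real.pi*t/a) : ℂ))) *
      Complex.exp (-(Real.pi : ℂ) * ((t : ℂ) - (x : ℂ)) ^ 2) *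
      Complex.exp (-2 * (Real.pi : ℂ) * Complex.I * (t : ℂ) * (ω : ℂ))
    = (((2:ℝ) ^ ((1:ℝ)/4) : ℝ) : ℂ) *
        ((1+ε)/2 * Complex.exp (-(2*(Real.pi:ℂ)) * (t:ℂ)^2 + gaborCC a x ω 1 * t + (-Real.pi*x^2))
        + (1-ε)/2 * Complex.exp (-(2*(Real.pi:ℂ)) * (t:ℂ)^2 + gaborCC a x ω (-1) * t + (-Real.pi*x^2))) := by
  have hc : ((Real.cosh (Real.pi*t/a) : ℝ) : ℂ)
      = (Complex.exp ((Real.pi*t/a : ℝ) : ℂ) + Complex.exp (-((Real.pi*t/a : ℝ) : ℂ)))/2 := by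
    rw [Real.cosh_eq]; push_cast [Complex.ofReal_exp]; ring
  have hs : ((Real.sinh (Real.pi*t/a) : ℝ) : ℂ)
      = (Complex.exp ((Real.pi*t/a : ℝ) : ℂ) - Complex.exp (-((Real.pi*t/a : ℝ) : ℂ)))/2 := by
    rw [Real.sinh_eq]; push_cast [Complex.ofReal_exp]; ring
  have h1 : Complex.exp (-(2*(Real.pi:ℂ)) * (t:ℂ)^2 + gaborCC a x ω 1 * t + (-Real.pi*x^2))
      = Complex.exp ((-Real.pi * t^2 : ℝ) : ℂ) * Complex.exp ((Real.pi*t/a : ℝ) : ℂ) *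
        Complex.exp (-(Real.pi : ℂ) * ((t : ℂ) - (x : ℂ)) ^ 2) *
        Complex.exp (-2 * (Real.pi : ℂ) * Complex.I * (t : ℂ) * (ω : ℂ)) := by
    rw [← Complex.exp_add, ← Complex.exp_add, ← Complex.exp_add]
    congr 1
    unfold gaborCC; push_cast; field_simp; ring
  have h2 : Complex.exp (-(2*(Real.pi:ℂ)) * (t:ℂ)^2 + gaborCC a x ω (-1) * t + (-Real.pi*x^2))
      = Complex.exp ((-Real.pi * t^2 : ℝ) : ℂ) * Complex.exp (-((Real.pi*t/a : ℝ) : ℂ)) *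
        Complex.exp (-(Real.pi : ℂ) * ((t : ℂ) - (x : ℂ)) ^ 2) *
        Complex.exp (-2 * (Real.pi : ℂ) * Complex.I * (t : ℂ) * (ω : ℂ)) := by
    rw [← Complex.exp_add, ← Complex.exp_add, ← Complex.exp_add]
    congr 1
    unfold gaborCC; push_cast; field_simp; ring
  rw [h1, h2]
  unfold normGaussian
  rw [hc, hs, Complex.ofReal_mul, Complex.ofReal_exp]
  ring

lemma gabor_const_one : (((2:ℝ) ^ ((1:ℝ)/4) : ℝ) : ℂ) * (((2:ℝ) ^ ((1:ℝ)/4) : ℝ) : ℂ) *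
    ((Real.pi : ℂ) / -(-(2*(Real.pi:ℂ)))) ^ ((1:ℂ)/2) = 1 := by
  have h2 : ((Real.pi : ℂ) / -(-(2*(Real.pi:ℂ)))) = ((1/2 : ℝ) : ℂ) := by
    have hπ : (Real.pi : ℂ) ≠ 0 := by exact_mod_cast Real.pi_ne_zero
    push_cast; rw [neg_neg]; field_simp
  have h3 : ((1:ℂ)/2) = (((1:ℝ)/2 : ℝ) : ℂ) := by norm_num
  rw [h2, h3, ← Complex.ofReal_cpow (by norm_num : (0:ℝ) ≤ 1/2)]
  rw [← Complex.ofReal_mul, ← Complex.ofReal_mul]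
  have : (2:ℝ)^((1:ℝ)/4) * (2:ℝ)^((1:ℝ)/4) * ((1:ℝ)/2)^((1:ℝ)/2) = 1 := by
    rw [← Real.rpow_add two_pos, show ((1:ℝ)/2) = 2⁻¹ by norm_num,
      Real.inv_rpow (by norm_num)]
    norm_num
  rw [this, Complex.ofReal_one]

lemma gabor_closed (a x ω : ℝ) (ε : ℂ) :
    gaborTransform
      (fun t => normGaussian t * ((Real.cosh (Real.pi*t/a) : ℂ) + ε * (Real.sinh (Real.pi*t/a) : ℂ)))
      x ω
    = gaborG a x ω ε := by
  have hb : (-(2*(Real.pi:ℂ))).re < 0 := by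
    simp [Real.pi_pos]
  have hint1 : Integrable (fun t : ℝ =>
      (1+ε)/2 * Complex.exp (-(2*(Real.pi:ℂ)) * (t:ℂ)^2 + gaborCC a x ω 1 * t + (-Real.pi*x^2))) :=
    (integrable_cexp_quadratic' hb _ _).const_mul _
  have hint2 : Integrable (fun t : ℝ =>
      (1-ε)/2 * Complex.exp (-(2*(Real.pi:ℂ)) * (t:ℂ)^2 + gaborCC a x ω (-1) * t + (-Real.pi*x^2))) :=
    (integrable_cexp_quadratic' hb _ _).const_mul _
  unfold gaborTransform gaborG
  simp only [gabor_integrand_eq a x ω ε]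
  rw [MeasureTheory.integral_const_mul, MeasureTheory.integral_add hint1 hint2,
    MeasureTheory.integral_const_mul, MeasureTheory.integral_const_mul,
    integral_cexp_quadratic hb, integral_cexp_quadratic hb]
  have h1 := gabor_const_one
  set K := ((Real.pi : ℂ) / -(-(2*(Real.pi:ℂ)))) ^ ((1:ℂ)/2) with hK
  set E1 := Complex.exp ((-Real.pi*x^2 : ℂ) - (gaborCC a x ω 1)^2 / (4 * -(2*(Real.pi:ℂ)))) with hE1
  set E2 := Complex.exp ((-Real.pi*x^2 : ℂ) - (gaborCC a x ω (-1))^2 / (4 * -(2*(Real.pi:ℂ)))) with hE2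
  have expand : (((2:ℝ) ^ ((1:ℝ)/4) : ℝ) : ℂ) *
      ((((2:ℝ) ^ ((1:ℝ)/4) : ℝ) : ℂ) * ((1+ε)/2 * (K * E1) + (1-ε)/2 * (K * E2)))
      = ((((2:ℝ) ^ ((1:ℝ)/4) : ℝ) : ℂ) * (((2:ℝ) ^ ((1:ℝ)/4) : ℝ) : ℂ) * K) *
        ((1+ε)/2 * E1 + (1-ε)/2 * E2) := by ring
  calc _ = ((((2:ℝ) ^ ((1:ℝ)/4) : ℝ) : ℂ) * (((2:ℝ) ^ ((1:ℝ)/4) : ℝ) : ℂ) * K) *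
        ((1+ε)/2 * E1 + (1-ε)/2 * E2) := expand
    _ = _ := by rw [h1]; ring

lemma abs_gaborG_eq (a x : ℝ) (ha : 0 < a) (n : ℤ) :
    ‖gaborG a x (a*n) Complex.I‖ = ‖gaborG a x (a*n) (-Complex.I)‖ := by
  have hπ : (Real.pi : ℂ) ≠ 0 := by exact_mod_cast Real.pi_ne_zero
  have ha' : (a : ℂ) ≠ 0 := by exact_mod_cast ha.ne'
  set u : ℂ := Complex.exp ((2*Real.pi*a*n*x : ℝ) * Complex.I) with hu
  set s : ℂ := Complex.exp ((Real.pi*n : ℝ) * Complex.I) with hs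
  have hs2 : s * s = 1 := by
    rw [hs, ← Complex.exp_add]
    rw [show ((Real.pi*n : ℝ) : ℂ) * Complex.I + ((Real.pi*n : ℝ) : ℂ) * Complex.I
        = (n : ℤ) * (2 * Real.pi * Complex.I) by push_cast; ring]
    exact Complex.exp_int_mul_two_pi_mul_I n
  have hconjE1 : (starRingEnd ℂ) ((-Real.pi*x^2 : ℂ) - (gaborCC a x (a*n) 1)^2 / (4 * -(2*(Real.pi:ℂ))))
      = ((-Real.pi*x^2 : ℂ) - (gaborCC a x (a*n) 1)^2 / (4 * -(2*(Real.pi:ℂ))))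
        + (2*Real.pi*a*n*x : ℝ) * Complex.I + (Real.pi*n : ℝ) * Complex.I := by
    unfold gaborCC
    simp only [map_sub, map_div₀, map_mul, map_add, map_neg, map_pow, map_ofNat,
      Complex.conj_ofReal, Complex.conj_I]
    push_cast
    field_simp
    ring
  have hconjE2 : (starRingEnd ℂ) ((-Real.pi*x^2 : ℂ) - (gaborCC a x (a*n) (-1))^2 / (4 * -(2*(Real.pi:ℂ))))
      = ((-Real.pi*x^2 : ℂ) - (gaborCC a x (a*n) (-1))^2 / (4 * -(2*(Real.pi:ℂ))))
        + (2*Real.pi*a*n*x : ℝ) * Complex.I - (Real.pi*n : ℝ) * Complex.I := by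
    unfold gaborCC
    simp only [map_sub, map_div₀, map_mul, map_add, map_neg, map_pow, map_ofNat,
      Complex.conj_ofReal, Complex.conj_I]
    push_cast
    field_simp
    ring
  have key : (starRingEnd ℂ) (gaborG a x (a*n) Complex.I) = u * s * gaborG a x (a*n) (-Complex.I) := by
    unfold gaborG
    have hsinv : (Complex.exp (((Real.pi*n : ℝ) : ℂ) * Complex.I))⁻¹ = s :=
      inv_eq_of_mul_eq_one_right hs2
    simp only [map_add, map_mul, map_div₀, map_one, Complex.conj_I, map_sub,
      Complex.conj_ofNat, ← Complex.exp_conj, hconjE1, hconjE2]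
    simp only [Complex.exp_add, Complex.exp_sub, div_eq_mul_inv, hsinv]
    rw [← hu, ← hs]
    ring
  have habs : ‖gaborG a x (a*n) Complex.I‖
      = ‖u * s * gaborG a x (a*n) (-Complex.I)‖ := by
    rw [← key, Complex.norm_conj]
  rw [habs, norm_mul, norm_mul, hu, hs, Complex.norm_exp, Complex.norm_exp]
  simp

lemma aux_cosh_le (u : ℝ) : Real.cosh u ≤ Real.exp |u| := by
  rw [Real.cosh_eq]
  have h1 : Real.exp u ≤ Real.exp |u| := Real.exp_le_exp.2 (le_abs_self u)
  have h2 : Real.exp (-u) ≤ Real.exp |u| := Real.exp_le_exp.2 (neg_le_abs u)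
  linarith

lemma aux_sinh_le (u : ℝ) : |Real.sinh u| ≤ Real.exp |u| := by
  rw [Real.abs_sinh, Real.sinh_eq]
  have h2 : 0 < Real.exp (-|u|) := Real.exp_pos _
  have h3 : 0 < Real.exp |u| := Real.exp_pos _
  linarith

lemma gabor_mem_aux (a : ℝ) (ha : 0 < a) (ε : ℂ) (hε : ‖ε‖ = 1) :
    MeasureTheory.MemLp
      (fun t => normGaussian t * ((Real.cosh (Real.pi*t/a) : ℂ) + ε * (Real.sinh (Real.pi*t/a) : ℂ)))
      2 (volume : Measure ℝ) := by
  set C : ℝ := 2 * (2:ℝ)^((1:ℝ)/4) * Real.exp (Real.pi/(2*a^2)) with hC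
  have hcont : Continuous (fun t : ℝ =>
      normGaussian t * ((Real.cosh (Real.pi*t/a) : ℂ) + ε * (Real.sinh (Real.pi*t/a) : ℂ))) := by
    unfold normGaussian; fun_prop
  have hg : MeasureTheory.MemLp (fun t : ℝ => C * Real.exp (-(Real.pi/2) * t^2)) 2
      (volume : Measure ℝ) := by
    rw [memLp_two_iff_integrable_sq ((by fun_prop :
      Continuous (fun t : ℝ => C * Real.exp (-(Real.pi/2) * t^2))).aestronglyMeasurable)]
    have : (fun t : ℝ => (C * Real.exp (-(Real.pi/2) * t^2))^2)
        = fun t : ℝ => C^2 * Real.exp (-Real.pi * t^2) := by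
      funext t
      rw [mul_pow, ← Real.exp_nat_mul]
      ring_nf
    rw [this]
    exact (integrable_exp_neg_mul_sq Real.pi_pos).const_mul _
  refine MeasureTheory.MemLp.mono' hg hcont.aestronglyMeasurable ?_
  filter_upwards with t
  have hb : ‖((Real.cosh (Real.pi*t/a) : ℝ) : ℂ) + ε * ((Real.sinh (Real.pi*t/a) : ℝ) : ℂ)‖
      ≤ 2 * Real.exp |Real.pi*t/a| := by
    calc ‖((Real.cosh (Real.pi*t/a) : ℝ) : ℂ) + ε * ((Real.sinh (Real.pi*t/a) : ℝ) : ℂ)‖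
        ≤ ‖((Real.cosh (Real.pi*t/a) : ℝ) : ℂ)‖ + ‖ε * ((Real.sinh (Real.pi*t/a) : ℝ) : ℂ)‖ :=
          norm_add_le _ _
      _ = |Real.cosh (Real.pi*t/a)| + |Real.sinh (Real.pi*t/a)| := by
          rw [norm_mul, Complex.norm_real, Complex.norm_real, hε,
            one_mul, Real.norm_eq_abs, Real.norm_eq_abs]
      _ ≤ Real.exp |Real.pi*t/a| + Real.exp |Real.pi*t/a| := by
          have := aux_cosh_le (Real.pi*t/a)
          have := aux_sinh_le (Real.pi*t/a)
          have hcp : 0 < Real.cosh (Real.pi*t/a) := Real.cosh_pos _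
          rw [abs_of_pos hcp]
          linarith
      _ = 2 * Real.exp |Real.pi*t/a| := by ring
  have hng : ‖normGaussian t‖ = (2:ℝ)^((1:ℝ)/4) * Real.exp (-Real.pi * t^2) := by
    unfold normGaussian
    rw [Complex.norm_real, Real.norm_eq_abs, abs_of_pos (by positivity)]
  rw [norm_mul, hng]
  calc (2:ℝ)^((1:ℝ)/4) * Real.exp (-Real.pi * t^2) *
        ‖((Real.cosh (Real.pi*t/a) : ℝ) : ℂ) + ε * ((Real.sinh (Real.pi*t/a) : ℝ) : ℂ)‖
      ≤ (2:ℝ)^((1:ℝ)/4) * Real.exp (-Real.pi * t^2) * (2 * Real.exp |Real.pi*t/a|) := by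
        apply mul_le_mul_of_nonneg_left hb (by positivity)
    _ ≤ C * Real.exp (-(Real.pi/2) * t^2) := by
        rw [hC]
        have key : Real.exp (-Real.pi * t^2) * Real.exp |Real.pi*t/a|
            ≤ Real.exp (Real.pi/(2*a^2)) * Real.exp (-(Real.pi/2) * t^2) := by
          rw [← Real.exp_add, ← Real.exp_add, Real.exp_le_exp]
          have habs : |Real.pi*t/a| = Real.pi * |t| / a := by
            rw [abs_div, abs_mul, abs_of_pos Real.pi_pos, abs_of_pos ha]
          rw [habs]
          have ha2 : Real.pi / (2*a^2) = (Real.pi * (1/a)^2)/2 := by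
            rw [div_eq_div_iff (by positivity) (by norm_num), div_pow, one_pow]
            field_simp
          have ha3 : Real.pi * |t| / a = Real.pi * (|t| * (1/a)) := by ring
          rw [ha2, ha3]
          nlinarith [mul_nonneg (le_of_lt Real.pi_pos) (sq_nonneg (|t| - 1/a)),
            _root_.sq_abs t, Real.pi_pos, mul_pos ha ha, abs_nonneg t]
        nlinarith [Real.rpow_pos_of_pos (by norm_num : (0:ℝ) < 2) ((1:ℝ)/4),
          Real.exp_pos (-Real.pi * t^2), Real.exp_pos (|Real.pi*t/a|),
          Real.exp_pos (-(Real.pi/2)*t^2), Real.exp_pos (Real.pi/(2*a^2)), key]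

/-- For `a > 0`, the signals `h⁺` and `h⁻` are in `L²(ℝ)`, their Gabor transform magnitudes
agree on `ℝ × aℤ`, and they do not agree up to global phase. -/
theorem hPlus_hMinus_counterexamples (a : ℝ) (ha : 0 < a) :
    MeasureTheory.MemLp (hPlus a) 2 (volume : Measure ℝ) ∧
    MeasureTheory.MemLp (hMinus a) 2 (volume : Measure ℝ) ∧
    (∀ x : ℝ, ∀ n : ℤ,
      ‖gaborTransform (hPlus a) x (a * n)‖ =
        ‖gaborTransform (hMinus a) x (a * n)‖) ∧
    ¬ ∃ α : ℝ, ∀ t : ℝ, hPlus a t = Complex.exp (α * Complex.I) * hMinus a t := by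
  have hPlus_eq : hPlus a = fun t => normGaussian t *
      ((Real.cosh (Real.pi*t/a) : ℂ) + Complex.I * (Real.sinh (Real.pi*t/a) : ℂ)) := rfl
  have hMinus_eq : hMinus a = fun t => normGaussian t *
      ((Real.cosh (Real.pi*t/a) : ℂ) + (-Complex.I) * (Real.sinh (Real.pi*t/a) : ℂ)) := by
    funext t; unfold hMinus; ring
  refine ⟨?_, ?_, ?_, ?_⟩
  · rw [hPlus_eq]
    exact gabor_mem_aux a ha Complex.I (by simp)
  · rw [hMinus_eq]
    exact gabor_mem_aux a ha (-Complex.I) (by simp)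
  · intro x n
    rw [hPlus_eq, hMinus_eq, gabor_closed, gabor_closed]
    exact abs_gaborG_eq a x ha n
  · rintro ⟨α, hα⟩
    have hng0 : normGaussian 0 ≠ 0 := by
      unfold normGaussian
      rw [Complex.ofReal_ne_zero]
      positivity
    have h0 := hα 0
    unfold hPlus hMinus at h0
    simp only [mul_zero, zero_div, Real.cosh_zero, Real.sinh_zero, Complex.ofReal_zero,
      Complex.ofReal_one, mul_zero, sub_zero, add_zero, mul_one] at h0
    have hexp : Complex.exp ((α:ℂ) * Complex.I) = 1 := by
      have h1 : Complex.exp ((α:ℂ) * Complex.I) * normGaussian 0 = 1 * normGaussian 0 := by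
        rw [one_mul, ← h0]
      exact mul_right_cancel₀ hng0 h1
    have hA := hα a
    unfold hPlus hMinus at hA
    rw [hexp, one_mul] at hA
    have haa : Real.pi * a / a = Real.pi := by
      field_simp
    rw [haa] at hA
    have hnga : normGaussian a ≠ 0 := by
      unfold normGaussian
      rw [Complex.ofReal_ne_zero]
      positivity
    have hcan := mul_left_cancel₀ hnga hA
    have hs0 : ((Real.sinh Real.pi : ℝ) : ℂ) = 0 := by
      have h2 : 2 * Complex.I * ((Real.sinh Real.pi : ℝ) : ℂ) = 0 := by
        linear_combination hcan
      simpa [Complex.I_ne_zero] using h2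
    have hs0' : Real.sinh Real.pi = 0 := by exact_mod_cast hs0
    have hspos : 0 < Real.sinh Real.pi := Real.sinh_pos_iff.2 Real.pi_pos
    linarith
end

section
/- Let a > 0 and δ > 0 and define the entire functions H^±_δ(z) = 1 ± i δ e^{πz/a} for z ∈ ℂ. Then: (i) |H^+_δ(z)| = |H^-_δ(z)| for every z ∈ ℝ + i aℤ; (ii) H^+_δ and H^-_δ have no common zero, and each has infinitely many zeros; in particular, there is no α ∈ ℝ with H^+_δ = e^{iα} H^-_δ. -/
open Complex

/-- `H⁺_δ(z) = 1 + iδ e^{πz/a}`. -/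
noncomputable def HPlus (a δ : ℝ) (z : ℂ) : ℂ :=
  1 + Complex.I * (δ : ℂ) * Complex.exp ((Real.pi : ℂ) * z / a)

/-- `H⁻_δ(z) = 1 - iδ e^{πz/a}`. -/
noncomputable def HMinus (a δ : ℝ) (z : ℂ) : ℂ :=
  1 - Complex.I * (δ : ℂ) * Complex.exp ((Real.pi : ℂ) * z / a)

/-- For `a, δ > 0`: (i) `|H⁺_δ| = |H⁻_δ|` on `ℝ + iaℤ`; (ii) `H⁺_δ` and `H⁻_δ` have no
common zero and each has infinitely many zeros; in particular they do not agree up to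
global phase. -/
theorem HPlus_HMinus_properties (a δ : ℝ) (ha : 0 < a) (hδ : 0 < δ) :
    (∀ x : ℝ, ∀ n : ℤ,
      ‖HPlus a δ ((x : ℂ) + (a * n : ℝ) * Complex.I)‖ =
        ‖HMinus a δ ((x : ℂ) + (a * n : ℝ) * Complex.I)‖) ∧
    (∀ z : ℂ, ¬ (HPlus a δ z = 0 ∧ HMinus a δ z = 0)) ∧
    {z : ℂ | HPlus a δ z = 0}.Infinite ∧
    {z : ℂ | HMinus a δ z = 0}.Infinite ∧
    ¬ ∃ α : ℝ, ∀ z : ℂ, HPlus a δ z = Complex.exp (α * Complex.I) * HMinus a δ z := by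
  have hπ : (Real.pi : ℂ) ≠ 0 := by exact_mod_cast Real.pi_ne_zero
  have haC : (a : ℂ) ≠ 0 := by exact_mod_cast ha.ne'
  have hδC : (δ : ℂ) ≠ 0 := by exact_mod_cast hδ.ne'
  -- general abs fact
  have habs : ∀ t : ℝ, ‖1 + (t : ℂ) * Complex.I‖ =
      ‖1 - (t : ℂ) * Complex.I‖ := by
    intro t
    rw [← Complex.norm_conj (1 + (t : ℂ) * Complex.I)]
    congr 1
    simp [map_add, map_mul, Complex.conj_I, sub_eq_add_neg, mul_comm]
  -- part (i)
  have part1 : ∀ x : ℝ, ∀ n : ℤ,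
      ‖HPlus a δ ((x : ℂ) + (a * n : ℝ) * Complex.I)‖ =
        ‖HMinus a δ ((x : ℂ) + (a * n : ℝ) * Complex.I)‖ := by
    intro x n
    have key : (Real.pi : ℂ) * ((x : ℂ) + ((a * n : ℝ) : ℂ) * Complex.I) / a
        = ((Real.pi * x / a : ℝ) : ℂ) + (n : ℂ) * ((Real.pi : ℂ) * Complex.I) := by
      push_cast
      field_simp
    have hexp : Complex.exp ((Real.pi : ℂ) * ((x : ℂ) + ((a * n : ℝ) : ℂ) * Complex.I) / a)
        = ((Real.exp (Real.pi * x / a) * (-1 : ℝ) ^ n : ℝ) : ℂ) := by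
      rw [key, Complex.exp_add, Complex.exp_int_mul, Complex.exp_pi_mul_I]
      push_cast [Complex.ofReal_exp]
      ring
    have h1 : HPlus a δ ((x : ℂ) + (a * n : ℝ) * Complex.I)
        = 1 + ((δ * (Real.exp (Real.pi * x / a) * (-1 : ℝ) ^ n) : ℝ) : ℂ) * Complex.I := by
      rw [HPlus, hexp]; push_cast; ring
    have h2 : HMinus a δ ((x : ℂ) + (a * n : ℝ) * Complex.I)
        = 1 - ((δ * (Real.exp (Real.pi * x / a) * (-1 : ℝ) ^ n) : ℝ) : ℂ) * Complex.I := by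
      rw [HMinus, hexp]; push_cast; ring
    rw [h1, h2]
    exact habs _
  -- part (ii) no common zero
  have part2 : ∀ z : ℂ, ¬ (HPlus a δ z = 0 ∧ HMinus a δ z = 0) := by
    rintro z ⟨h1, h2⟩
    rw [HPlus] at h1
    rw [HMinus] at h2
    have hw : Complex.I * (δ : ℂ) * Complex.exp ((Real.pi : ℂ) * z / a) = 0 := by
      linear_combination (h1 - h2) / 2
    simp [Complex.exp_ne_zero, Complex.I_ne_zero, hδC] at hw
  -- zeros of HPlus: exp(πz/a) = I/δ
  have hIδ : (Complex.I / (δ : ℂ)) ≠ 0 := div_ne_zero Complex.I_ne_zero hδC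
  have hnIδ : (-(Complex.I) / (δ : ℂ)) ≠ 0 := div_ne_zero (neg_ne_zero.2 Complex.I_ne_zero) hδC
  have hinfaux : ∀ c : ℂ, c ≠ 0 →
      {z : ℂ | Complex.exp ((Real.pi : ℂ) * z / a) = c}.Infinite := by
    intro c hc
    apply Set.infinite_of_injective_forall_mem
      (f := fun k : ℤ => ((a : ℂ) / Real.pi) * (Complex.log c + 2 * Real.pi * k * Complex.I))
    · intro k m h
      have h2 := mul_left_cancel₀ (div_ne_zero haC hπ) h
      have h3 := add_left_cancel h2
      have h3' : (k : ℂ) * (2 * (Real.pi : ℂ) * Complex.I) = (m : ℂ) * (2 * (Real.pi : ℂ) * Complex.I) := by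
        linear_combination h3
      have h4 : (k : ℂ) = m := mul_right_cancel₀ (by simp [hπ, Complex.I_ne_zero]) h3'
      exact_mod_cast h4
    · intro k
      show Complex.exp _ = c
      have harg : (Real.pi : ℂ) * (((a : ℂ) / Real.pi) *
          (Complex.log c + 2 * Real.pi * k * Complex.I)) / a
          = Complex.log c + (k : ℂ) * (2 * Real.pi * Complex.I) := by
        field_simp
      rw [harg, Complex.exp_add, Complex.exp_log hc, Complex.exp_int_mul_two_pi_mul_I, mul_one]
  have zeroPlus : {z : ℂ | HPlus a δ z = 0} =
      {z : ℂ | Complex.exp ((Real.pi : ℂ) * z / a) = Complex.I / δ} := by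
    ext z
    simp only [Set.mem_setOf_eq, HPlus]
    constructor
    · intro h
      rw [eq_div_iff hδC]
      linear_combination (-Complex.I) * h + (δ : ℂ) * Complex.exp ((Real.pi : ℂ) * z / a) * Complex.I_mul_I
    · intro h
      rw [h]
      field_simp
      linear_combination Complex.I_sq
  have zeroMinus : {z : ℂ | HMinus a δ z = 0} =
      {z : ℂ | Complex.exp ((Real.pi : ℂ) * z / a) = -(Complex.I) / δ} := by
    ext z
    simp only [Set.mem_setOf_eq, HMinus]
    constructor
    · intro h
      rw [eq_div_iff hδC]
      linear_combination Complex.I * h + (δ : ℂ) * Complex.exp ((Real.pi : ℂ) * z / a) * Complex.I_mul_I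
    · intro h
      rw [h]
      field_simp
      linear_combination Complex.I_sq
  have part3 : {z : ℂ | HPlus a δ z = 0}.Infinite := by
    rw [zeroPlus]; exact hinfaux _ hIδ
  have part4 : {z : ℂ | HMinus a δ z = 0}.Infinite := by
    rw [zeroMinus]; exact hinfaux _ hnIδ
  refine ⟨part1, part2, part3, part4, ?_⟩
  rintro ⟨α, hα⟩
  obtain ⟨z₀, hz₀⟩ := part3.nonempty
  have h := hα z₀
  rw [hz₀] at h
  have hm : HMinus a δ z₀ = 0 := by
    rcases mul_eq_zero.1 h.symm with h' | h'
    · exact absurd h' (Complex.exp_ne_zero _)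
    · exact h'
  exact part2 z₀ ⟨hz₀, hm⟩
end

section
/- Let F : ℂ → ℂ be an entire function with ‖F‖_F = (∫_ℂ |F(z)|² e^{-π|z|²} dz)^{1/2} < ∞. Then for every z ∈ ℂ, |F(z)| ≤ ‖F‖_F · e^{(π/2)|z|²}. -/
open MeasureTheory Complex Set


lemma meanval (G : ℂ → ℂ) (hG : Differentiable ℂ G) {r : ℝ} (hr : 0 < r) :
    ‖G 0‖ ^ 2 * (2 * Real.pi) ≤ ∫ θ in (-Real.pi)..Real.pi,
      ‖G (Complex.polarCoord.symm (r, θ))‖ ^ 2 := by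
  have hH : Differentiable ℂ (fun w => (G w) ^ 2) := fun x => (hG x).pow 2
  have h0 : (0 : ℂ) ∈ Metric.ball (0 : ℂ) r := by simpa using hr
  have key := (hH.differentiableOn (s := Metric.closedBall 0 r)).circleIntegral_sub_inv_smul h0
  have hnorm : ‖(2 * Real.pi * I : ℂ) • (G 0 ^ 2)‖ = ‖G 0‖ ^ 2 * (2 * Real.pi) := by
    simp [norm_smul, norm_pow, Complex.norm_real, abs_of_pos Real.pi_pos, mul_comm]
  have hbound : ‖∮ z in C(0, r), (z - 0)⁻¹ • (G z ^ 2)‖ ≤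
      ∫ θ in (0:ℝ)..(2 * Real.pi), ‖G (circleMap 0 r θ)‖ ^ 2 := by
    rw [circleIntegral]
    refine le_trans (intervalIntegral.norm_integral_le_integral_norm (by positivity)) ?_
    refine le_of_eq (intervalIntegral.integral_congr fun θ _ => ?_)
    rw [norm_smul, norm_smul, deriv_circleMap]
    simp only [sub_zero, norm_inv, norm_pow, norm_mul, Complex.norm_I, mul_one,
      norm_circleMap_zero, abs_of_pos hr]
    field_simp
  have hperiod : (∫ θ in (0:ℝ)..(2 * Real.pi), ‖G (circleMap 0 r θ)‖ ^ 2)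
      = ∫ θ in (-Real.pi)..Real.pi, ‖G (circleMap 0 r θ)‖ ^ 2 := by
    have hp : Function.Periodic (fun θ => ‖G (circleMap 0 r θ)‖ ^ 2) (2 * Real.pi) :=
      fun θ => by simp only [periodic_circleMap 0 r θ]
    have := hp.intervalIntegral_add_eq 0 (-Real.pi)
    simpa [neg_add_eq_sub, two_mul, sub_eq_add_neg] using this
  have hmap : ∀ θ : ℝ, circleMap 0 r θ = Complex.polarCoord.symm (r, θ) := by
    intro θ
    rw [Complex.polarCoord_symm_apply, circleMap]
    push_cast
    rw [Complex.exp_mul_I]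
    ring
  calc ‖G 0‖ ^ 2 * (2 * Real.pi) = ‖(2 * Real.pi * I : ℂ) • (G 0 ^ 2)‖ := hnorm.symm
    _ = ‖∮ z in C(0, r), (z - 0)⁻¹ • (G z ^ 2)‖ := by rw [key]
    _ ≤ ∫ θ in (0:ℝ)..(2 * Real.pi), ‖G (circleMap 0 r θ)‖ ^ 2 := hbound
    _ = ∫ θ in (-Real.pi)..Real.pi, ‖G (circleMap 0 r θ)‖ ^ 2 := hperiod
    _ = _ := by simp_rw [hmap]

lemma polar_integrableOn_real (f : ℝ × ℝ → ℝ) (hf : Integrable f) :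
    IntegrableOn (fun p : ℝ × ℝ => p.1 • f (polarCoord.symm p)) polarCoord.target := by
  set B : ℝ × ℝ → ℝ × ℝ →L[ℝ] ℝ × ℝ := fun p =>
    LinearMap.toContinuousLinearMap (Matrix.toLin (Module.Basis.finTwoProd ℝ) (Module.Basis.finTwoProd ℝ)
      !![Real.cos p.2, -p.1 * Real.sin p.2; Real.sin p.2, p.1 * Real.cos p.2]) with hB
  have hs : MeasurableSet polarCoord.target := polarCoord.open_target.measurableSet
  have hder : ∀ p ∈ polarCoord.target,
      HasFDerivWithinAt polarCoord.symm (B p) polarCoord.target p := fun p _ =>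
    (hasFDerivAt_polarCoord_symm p).hasFDerivWithinAt
  have hinj : InjOn polarCoord.symm polarCoord.target := by
    have := polarCoord.symm.injOn
    rwa [OpenPartialHomeomorph.symm_source] at this
  have B_det : ∀ p, (B p).det = p.1 := by
    intro p
    conv_rhs => rw [← one_mul p.1, ← Real.cos_sq_add_sin_sq p.2]
    simp only [hB, neg_mul, LinearMap.det_toContinuousLinearMap, LinearMap.det_toLin,
      Matrix.det_fin_two_of, sub_neg_eq_add]
    ring
  have h1 : IntegrableOn f (polarCoord.symm '' polarCoord.target) := by
    rw [polarCoord.symm_image_target_eq_source]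
    exact hf.integrableOn
  rw [integrableOn_image_iff_integrableOn_abs_det_fderiv_smul volume hs hder hinj f] at h1
  refine h1.congr_fun (fun p hp => ?_) hs
  beta_reduce
  rw [B_det, abs_of_pos hp.1]

lemma polar_integrableOn (g : ℂ → ℝ) (hg : Integrable g) :
    IntegrableOn (fun p : ℝ × ℝ => p.1 • g (Complex.polarCoord.symm p)) polarCoord.target := by
  have hg' : Integrable (g ∘ Complex.measurableEquivRealProd.symm) := by
    rw [(Complex.volume_preserving_equiv_real_prod.symm).integrable_comp_emb
      Complex.measurableEquivRealProd.symm.measurableEmbedding]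
    exact hg
  exact polar_integrableOn_real (g ∘ Complex.measurableEquivRealProd.symm) hg'

lemma gauss_aux : ∫ r in Ioi (0:ℝ), r * Real.exp (-Real.pi * r ^ 2) = (2 * Real.pi)⁻¹ := by
  have hd : ∀ x ∈ Ici (0:ℝ), HasDerivAt (fun r : ℝ => -(2 * Real.pi)⁻¹ * Real.exp (-Real.pi * r ^ 2))
      (x * Real.exp (-Real.pi * x ^ 2)) x := by
    intro x _
    have h1 : HasDerivAt (fun r : ℝ => -Real.pi * r ^ 2) (-Real.pi * (2 * x)) x := by
      simpa using ((hasDerivAt_pow 2 x).const_mul (-Real.pi))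
    have h2 := (h1.exp).const_mul (-(2 * Real.pi)⁻¹)
    refine h2.congr_deriv ?_
    field_simp
  have hint : IntegrableOn (fun x : ℝ => x * Real.exp (-Real.pi * x ^ 2)) (Ioi 0) :=
    (integrable_mul_exp_neg_mul_sq Real.pi_pos).integrableOn
  have htend : Filter.Tendsto (fun r : ℝ => -(2 * Real.pi)⁻¹ * Real.exp (-Real.pi * r ^ 2))
      Filter.atTop (nhds 0) := by
    rw [show (0:ℝ) = -(2 * Real.pi)⁻¹ * 0 by ring]
    refine Filter.Tendsto.const_mul _ ?_
    refine Real.tendsto_exp_atBot.comp ?_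
    have h2 : Filter.Tendsto (fun r : ℝ => r ^ 2) Filter.atTop Filter.atTop :=
      Filter.tendsto_pow_atTop (by norm_num)
    exact h2.const_mul_atTop_of_neg (neg_lt_zero.mpr Real.pi_pos)
  have := integral_Ioi_of_hasDerivAt_of_tendsto' hd hint htend
  rw [this]
  norm_num

lemma core (G : ℂ → ℂ) (hG : Differentiable ℂ G)
    (hInt : Integrable (fun w : ℂ => ‖G w‖ ^ 2 * Real.exp (-Real.pi * ‖w‖ ^ 2))) :
    ‖G 0‖ ^ 2 ≤ ∫ w : ℂ, ‖G w‖ ^ 2 * Real.exp (-Real.pi * ‖w‖ ^ 2) := by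
  set g : ℂ → ℝ := fun w => ‖G w‖ ^ 2 * Real.exp (-Real.pi * ‖w‖ ^ 2) with hgdef
  have hpol : IntegrableOn (fun p : ℝ × ℝ => p.1 • g (Complex.polarCoord.symm p))
      polarCoord.target := polar_integrableOn g hInt
  rw [← Complex.integral_comp_polarCoord_symm g]
  have htarget : polarCoord.target = Ioi (0:ℝ) ×ˢ Ioo (-Real.pi) Real.pi := rfl
  rw [htarget] at hpol ⊢
  rw [Measure.volume_eq_prod] at hpol ⊢
  rw [setIntegral_prod _ hpol]
  set low : ℝ → ℝ := fun r => (2 * Real.pi * ‖G 0‖ ^ 2) * (r * Real.exp (-Real.pi * r ^ 2))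
    with hlowdef
  have hlowint : IntegrableOn low (Ioi 0) :=
    ((integrable_mul_exp_neg_mul_sq Real.pi_pos).const_mul _).integrableOn
  have hinnerint : IntegrableOn
      (fun r : ℝ => ∫ θ in Ioo (-Real.pi) Real.pi, ((r, θ) : ℝ × ℝ).1 •
        g (Complex.polarCoord.symm (r, θ))) (Ioi 0) := by
    have h := hpol
    rw [IntegrableOn, ← Measure.prod_restrict] at h
    exact h.integral_prod_left
  have hpt : ∀ r ∈ Ioi (0:ℝ), low r ≤ ∫ θ in Ioo (-Real.pi) Real.pi,
      ((r, θ) : ℝ × ℝ).1 • g (Complex.polarCoord.symm (r, θ)) := by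
    intro r hr
    have hr' : (0:ℝ) < r := hr
    have heq : ∀ θ : ℝ, ((r, θ) : ℝ × ℝ).1 • g (Complex.polarCoord.symm (r, θ)) =
        (r * Real.exp (-Real.pi * r ^ 2)) * ‖G (Complex.polarCoord.symm (r, θ))‖ ^ 2 := by
      intro θ
      have habs : ‖(Complex.polarCoord.symm (r, θ))‖ = r := by
        rw [Complex.norm_polarCoord_symm]
        exact abs_of_pos hr'
      simp only [hgdef, smul_eq_mul, habs]
      ring
    calc low r = (r * Real.exp (-Real.pi * r ^ 2)) * (‖G 0‖ ^ 2 * (2 * Real.pi)) := by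
          rw [hlowdef]; ring
      _ ≤ (r * Real.exp (-Real.pi * r ^ 2)) *
          ∫ θ in (-Real.pi)..Real.pi, ‖G (Complex.polarCoord.symm (r, θ))‖ ^ 2 :=
          mul_le_mul_of_nonneg_left (meanval G hG hr') (by positivity)
      _ = ∫ θ in Ioo (-Real.pi) Real.pi,
          (r * Real.exp (-Real.pi * r ^ 2)) * ‖G (Complex.polarCoord.symm (r, θ))‖ ^ 2 := by
          rw [intervalIntegral.integral_of_le (by linarith [Real.pi_pos]), ← integral_const_mul]
          exact (setIntegral_congr_set Ioo_ae_eq_Ioc).symm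
      _ = _ := by simp_rw [heq]
  calc ‖G 0‖ ^ 2 = ∫ r in Ioi (0:ℝ), low r := by
        rw [hlowdef]
        rw [integral_const_mul, gauss_aux]
        field_simp
      _ ≤ _ := setIntegral_mono_on hlowint hinnerint measurableSet_Ioi hpt

/-- Pointwise bound in the Fock space: if `F` is entire with finite Fock norm
`‖F‖_F = (∫_ℂ |F(z)|² e^{-π|z|²} dz)^{1/2}`, then `|F(z)| ≤ ‖F‖_F e^{(π/2)|z|²}`. -/
theorem fock_pointwise_bound (F : ℂ → ℂ) (hF : Differentiable ℂ F)
    (hFock : Integrable (fun z : ℂ => ‖F z‖ ^ 2 * Real.exp (-Real.pi * ‖z‖ ^ 2))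
      (volume : Measure ℂ)) :
    ∀ z : ℂ, ‖F z‖ ≤
      Real.sqrt (∫ w : ℂ, ‖F w‖ ^ 2 * Real.exp (-Real.pi * ‖w‖ ^ 2)) *
        Real.exp (Real.pi / 2 * ‖z‖ ^ 2) := by
  intro z
  set G : ℂ → ℂ := fun w => F (w + z) * Complex.exp (-((Real.pi : ℂ) * (starRingEnd ℂ z) * w))
    with hGdef
  have hGdiff : Differentiable ℂ G :=
    (hF.comp (differentiable_id.add_const z)).mul
      (((differentiable_id.const_mul _).neg).cexp)
  have hid : ∀ w : ℂ, ‖G w‖ ^ 2 * Real.exp (-Real.pi * ‖w‖ ^ 2) =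
      (‖F (w + z)‖ ^ 2 * Real.exp (-Real.pi * ‖w + z‖ ^ 2)) * Real.exp (Real.pi * ‖z‖ ^ 2) := by
    intro w
    have h1 : ‖G w‖ ^ 2 = ‖F (w + z)‖ ^ 2 *
        Real.exp (2 * (-((Real.pi : ℂ) * (starRingEnd ℂ z) * w)).re) := by
      rw [hGdef]
      simp only [norm_mul, mul_pow, Complex.norm_exp]
      rw [sq (Real.exp _), ← Real.exp_add]
      ring_nf
    rw [h1]
    simp only [mul_assoc, ← Real.exp_add]
    congr 1
    simp only [Complex.sq_norm, Complex.normSq_add, Complex.neg_re,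
      Complex.mul_re, Complex.mul_im, Complex.ofReal_re, Complex.ofReal_im,
      Complex.conj_re, Complex.conj_im, Complex.normSq_apply, Complex.add_re, Complex.add_im]
    ring
  have hIntG : Integrable (fun w : ℂ => ‖G w‖ ^ 2 * Real.exp (-Real.pi * ‖w‖ ^ 2)) := by
    simp_rw [hid]
    exact (hFock.comp_add_right z).mul_const _
  have hcore := core G hGdiff hIntG
  simp_rw [hid] at hcore
  rw [integral_mul_const, integral_add_right_eq_self
    (fun w : ℂ => ‖F w‖ ^ 2 * Real.exp (-Real.pi * ‖w‖ ^ 2)) z] at hcore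
  have hG0 : G 0 = F z := by simp [hGdef]
  rw [hG0] at hcore
  have hI : 0 ≤ ∫ w : ℂ, ‖F w‖ ^ 2 * Real.exp (-Real.pi * ‖w‖ ^ 2) :=
    integral_nonneg fun w => by positivity
  have hexp : Real.exp (Real.pi * ‖z‖ ^ 2) =
      (Real.exp (Real.pi / 2 * ‖z‖ ^ 2)) ^ 2 := by
    conv_rhs => rw [sq, ← Real.exp_add]
    ring_nf
  calc ‖F z‖ = Real.sqrt (‖F z‖ ^ 2) := by
        rw [Real.sqrt_sq (norm_nonneg _)]
    _ ≤ Real.sqrt ((∫ w : ℂ, ‖F w‖ ^ 2 * Real.exp (-Real.pi * ‖w‖ ^ 2)) *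
        Real.exp (Real.pi * ‖z‖ ^ 2)) := Real.sqrt_le_sqrt hcore
    _ = _ := by
        rw [Real.sqrt_mul hI, hexp, Real.sqrt_sq (Real.exp_pos _).le]
end
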